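/- Suppose there is a constant C such that ‖S_{m}^{α,β}(g,·)‖_{L^p(μ^{α,β})} ≤ C‖g‖_{L^p(μ^{α,β})} for all g ∈ L^p(μ^{α,β}) and all m ≥ 0 (uniform boundedness of Jacobi–Fourier partial sums). Then the Fourier–Sobolev partial sums satisfy ‖S_n^S(f,·)‖_{S,p} ≤ max{1, C}·‖f‖_{S,p} for all f in the Sobolev space and all n ≥ 0, where ‖f‖_{S,p}^p = Σ_{k=0}^{ℓ-1}|f^{(k)}(ω_k)|^p + ∫_{-1}^1 |f^{(ℓ)}|^p dμ^{α,β}. -/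
import Mathlib


open Set MeasureTheory Finset

/-- The Jacobi weight. -/
noncomputable def jacW (α β x : ℝ) : ℝ := (1 - x) ^ α * (1 + x) ^ β

/-- The discrete-continuous Jacobi-Sobolev inner product. -/
noncomputable def sobIP (α β : ℝ) (ℓ : ℕ) (ω : ℕ → ℝ) (f g : ℝ → ℝ) : ℝ :=
  (∑ k ∈ Finset.range ℓ, iteratedDeriv k f (ω k) * iteratedDeriv k g (ω k)) +
    ∫ x in Set.Ioo (-1 : ℝ) 1, iteratedDeriv ℓ f x * iteratedDeriv ℓ g x * jacW α β x

/-- The `n`-th partial sum of the Fourier–Sobolev series of `f`. -/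
noncomputable def sobPartialSum (α β : ℝ) (ℓ : ℕ) (ω : ℕ → ℝ) (q : ℕ → ℝ → ℝ)
    (f : ℝ → ℝ) (n : ℕ) : ℝ → ℝ :=
  fun x => ∑ k ∈ Finset.range (n + 1), sobIP α β ℓ ω f (q k) * q k x

/-- The `j`-th Jacobi–Fourier coefficient of `g`. -/
noncomputable def jacCoef (α β : ℝ) (jp : ℕ → Polynomial ℝ) (g : ℝ → ℝ) (j : ℕ) : ℝ :=
  ∫ x in Set.Ioo (-1 : ℝ) 1, g x * (jp j).eval x * jacW α β x

/-- The `m`-th partial sum of the Jacobi–Fourier series of `g`. -/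
noncomputable def jacPartialSum (α β : ℝ) (jp : ℕ → Polynomial ℝ) (g : ℝ → ℝ)
    (m : ℕ) : ℝ → ℝ :=
  fun x => ∑ j ∈ Finset.range (m + 1), jacCoef α β jp g j * (jp j).eval x

/-- The `L^p(μ^{α,β})` norm. -/
noncomputable def jacNorm (α β p : ℝ) (g : ℝ → ℝ) : ℝ :=
  (∫ x in Set.Ioo (-1 : ℝ) 1, |g x| ^ p * jacW α β x) ^ (1 / p)

/-- The discrete-continuous Jacobi-Sobolev norm of type `p`. -/
noncomputable def sobNorm (α β p : ℝ) (ℓ : ℕ) (ω : ℕ → ℝ) (f : ℝ → ℝ) : ℝ :=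
  ((∑ k ∈ Finset.range ℓ, |iteratedDeriv k f (ω k)| ^ p) +
    ∫ x in Set.Ioo (-1 : ℝ) 1, |iteratedDeriv ℓ f x| ^ p * jacW α β x) ^ (1 / p)

private lemma itd_polyEval (k : ℕ) (P : Polynomial ℝ) :
    iteratedDeriv k (fun x => P.eval x) =
      fun x => (Polynomial.derivative^[k] P).eval x := by
  induction k generalizing P with
  | zero => simp
  | succ k ih =>
    rw [iteratedDeriv_succ']
    have hd : deriv (fun x => P.eval x) = fun x => P.derivative.eval x := by
      funext x; simp
    rw [hd, ih, Function.iterate_succ_apply]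

private lemma itd_sobPartialSum (α β : ℝ) (ℓ : ℕ) (ω : ℕ → ℝ) (q : ℕ → ℝ → ℝ)
    (hq_poly : ∀ n, ∃ P : Polynomial ℝ, q n = fun x => P.eval x)
    (f : ℝ → ℝ) (n k : ℕ) (x : ℝ) :
    iteratedDeriv k (sobPartialSum α β ℓ ω q f n) x =
      ∑ m ∈ Finset.range (n + 1), sobIP α β ℓ ω f (q m) * iteratedDeriv k (q m) x := by
  choose P hP using hq_poly
  have hS : sobPartialSum α β ℓ ω q f n =
      fun y => (∑ m ∈ Finset.range (n + 1), sobIP α β ℓ ω f (q m) • P m).eval y := by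
    funext y
    simp only [sobPartialSum, Polynomial.eval_finset_sum, Polynomial.eval_smul,
      smul_eq_mul]
    refine Finset.sum_congr rfl fun m _ => ?_
    rw [hP m]
  rw [hS, itd_polyEval, Polynomial.iterate_derivative_sum]
  simp only [Polynomial.eval_finset_sum]
  refine Finset.sum_congr rfl fun m _ => ?_
  rw [hP m, itd_polyEval, Polynomial.iterate_derivative_smul]
  simp

theorem stmt_16 (α β p : ℝ) (hα : -1 < α) (hβ : -1 < β) (hp : 1 ≤ p)
    (ℓ : ℕ) (hℓ : 1 ≤ ℓ) (ω : ℕ → ℝ) (jp : ℕ → Polynomial ℝ) (q : ℕ → ℝ → ℝ)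
    (hq_poly : ∀ n, ∃ P : Polynomial ℝ, q n = fun x => P.eval x)
    (hq_low_der : ∀ n < ℓ, ∀ k < ℓ,
      iteratedDeriv k (q n) (ω k) = if k = n then 1 else 0)
    (hq_low_top : ∀ n < ℓ, ∀ x : ℝ, iteratedDeriv ℓ (q n) x = 0)
    (hq_high_der : ∀ n, ℓ ≤ n → ∀ k < ℓ, iteratedDeriv k (q n) (ω k) = 0)
    (hq_high_top : ∀ n, ℓ ≤ n → ∀ x : ℝ,
      iteratedDeriv ℓ (q n) x = (jp (n - ℓ)).eval x)
    (C : ℝ)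
    (hC : ∀ g : ℝ → ℝ,
      IntegrableOn (fun x : ℝ => |g x| ^ p * jacW α β x) (Set.Ioo (-1 : ℝ) 1) →
      ∀ m : ℕ, jacNorm α β p (jacPartialSum α β jp g m) ≤ C * jacNorm α β p g)
    (f : ℝ → ℝ)
    (hf : IntegrableOn (fun x : ℝ => iteratedDeriv ℓ f x * jacW α β x)
      (Set.Ioo (-1 : ℝ) 1))
    (hfp : IntegrableOn (fun x : ℝ => |iteratedDeriv ℓ f x| ^ p * jacW α β x)
      (Set.Ioo (-1 : ℝ) 1)) :
    ∀ n : ℕ, sobNorm α β p ℓ ω (sobPartialSum α β ℓ ω q f n) ≤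
      max 1 C * sobNorm α β p ℓ ω f := by
  intro n
  have hp0 : (0 : ℝ) < p := lt_of_lt_of_le one_pos hp
  set M : ℝ := max 1 C with hM_def
  have hM1 : (1 : ℝ) ≤ M := le_max_left _ _
  have hM0 : (0 : ℝ) ≤ M := le_trans zero_le_one hM1
  -- nonnegativity of the weight
  have hw : ∀ x ∈ Set.Ioo (-1 : ℝ) 1, 0 ≤ jacW α β x := by
    intro x hx
    exact mul_nonneg (Real.rpow_nonneg (by linarith [hx.2]) _)
      (Real.rpow_nonneg (by linarith [hx.1]) _)
  -- abbreviations
  set Af : ℝ := ∑ k ∈ Finset.range ℓ, |iteratedDeriv k f (ω k)| ^ p with hAf_def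
  set If : ℝ := ∫ x in Set.Ioo (-1 : ℝ) 1, |iteratedDeriv ℓ f x| ^ p * jacW α β x
    with hIf_def
  have hAf0 : 0 ≤ Af :=
    Finset.sum_nonneg fun k _ => Real.rpow_nonneg (abs_nonneg _) _
  have hIf0 : 0 ≤ If := by
    refine setIntegral_nonneg measurableSet_Ioo fun x hx => ?_
    exact mul_nonneg (Real.rpow_nonneg (abs_nonneg _) _) (hw x hx)
  have hsobf0 : 0 ≤ sobNorm α β p ℓ ω f :=
    Real.rpow_nonneg (by exact add_nonneg hAf0 hIf0) _
  -- the Sobolev-Fourier coefficients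
  have hc_low : ∀ m < ℓ, sobIP α β ℓ ω f (q m) = iteratedDeriv m f (ω m) := by
    intro m hm
    have h1 : ∑ k ∈ Finset.range ℓ,
        iteratedDeriv k f (ω k) * iteratedDeriv k (q m) (ω k)
        = iteratedDeriv m f (ω m) := by
      rw [Finset.sum_congr rfl
        (fun k hk => by rw [hq_low_der m hm k (Finset.mem_range.mp hk)])]
      simp only [mul_ite, mul_one, mul_zero]
      rw [Finset.sum_ite_eq' (Finset.range ℓ) m (fun k => iteratedDeriv k f (ω k))]
      simp [hm]
    simp only [sobIP, h1, hq_low_top m hm, mul_zero, zero_mul,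
      integral_zero, add_zero]
  have hc_high : ∀ m, ℓ ≤ m →
      sobIP α β ℓ ω f (q m) = jacCoef α β jp (iteratedDeriv ℓ f) (m - ℓ) := by
    intro m hm
    have h1 : ∑ k ∈ Finset.range ℓ,
        iteratedDeriv k f (ω k) * iteratedDeriv k (q m) (ω k) = 0 :=
      Finset.sum_eq_zero fun k hk => by
        rw [hq_high_der m hm k (Finset.mem_range.mp hk), mul_zero]
    simp only [sobIP, h1, hq_high_top m hm, zero_add]
    rfl
  by_cases hn : n < ℓ
  · -- low case: the partial sum is an interpolation polynomial
    have htop : ∀ x : ℝ,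
        iteratedDeriv ℓ (sobPartialSum α β ℓ ω q f n) x = 0 := by
      intro x
      rw [itd_sobPartialSum α β ℓ ω q hq_poly f n ℓ x]
      refine Finset.sum_eq_zero fun m hm => ?_
      have hmℓ : m < ℓ := lt_of_lt_of_le (Finset.mem_range.mp hm) hn
      rw [hq_low_top m hmℓ x, mul_zero]
    have hlow : ∀ k < ℓ, iteratedDeriv k (sobPartialSum α β ℓ ω q f n) (ω k)
        = if k ≤ n then iteratedDeriv k f (ω k) else 0 := by
      intro k hk
      rw [itd_sobPartialSum α β ℓ ω q hq_poly f n k (ω k)]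
      have : ∀ m ∈ Finset.range (n + 1),
          sobIP α β ℓ ω f (q m) * iteratedDeriv k (q m) (ω k) =
            if k = m then sobIP α β ℓ ω f (q m) else 0 := by
        intro m hm
        have hmℓ : m < ℓ := lt_of_lt_of_le (Finset.mem_range.mp hm) hn
        rw [hq_low_der m hmℓ k hk]
        simp
      rw [Finset.sum_congr rfl this,
        Finset.sum_ite_eq (Finset.range (n + 1)) k (fun m => sobIP α β ℓ ω f (q m))]
      by_cases hkn : k ≤ n
      · rw [if_pos (Finset.mem_range.mpr (Nat.lt_succ_of_le hkn)), if_pos hkn,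
          hc_low k hk]
      · rw [if_neg (by simp only [Finset.mem_range]; omega), if_neg hkn]
    -- compute the Sobolev norm
    unfold sobNorm
    have hIS : (∫ x in Set.Ioo (-1 : ℝ) 1,
        |iteratedDeriv ℓ (sobPartialSum α β ℓ ω q f n) x| ^ p * jacW α β x) = 0 := by
      have : ∀ x : ℝ,
          |iteratedDeriv ℓ (sobPartialSum α β ℓ ω q f n) x| ^ p * jacW α β x = 0 := by
        intro x
        rw [htop x, abs_zero, Real.zero_rpow (ne_of_gt hp0), zero_mul]
      simp only [this, integral_zero]
    rw [hIS]
    have hAS : (∑ k ∈ Finset.range ℓ,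
        |iteratedDeriv k (sobPartialSum α β ℓ ω q f n) (ω k)| ^ p) ≤ Af := by
      refine Finset.sum_le_sum fun k hk => ?_
      rw [hlow k (Finset.mem_range.mp hk)]
      by_cases hkn : k ≤ n
      · simp [hkn]
      · simp only [hkn, if_false, abs_zero, Real.zero_rpow (ne_of_gt hp0)]
        exact Real.rpow_nonneg (abs_nonneg _) _
    calc ((∑ k ∈ Finset.range ℓ,
          |iteratedDeriv k (sobPartialSum α β ℓ ω q f n) (ω k)| ^ p) + 0) ^ (1 / p)
        ≤ (Af + If) ^ (1 / p) := by
          refine Real.rpow_le_rpow ?_ ?_ (by positivity)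
          · rw [add_zero]
            exact Finset.sum_nonneg fun k _ => Real.rpow_nonneg (abs_nonneg _) _
          · rw [add_zero]
            exact le_add_of_le_of_nonneg hAS hIf0
      _ = sobNorm α β p ℓ ω f := rfl
      _ ≤ M * sobNorm α β p ℓ ω f := le_mul_of_one_le_left hsobf0 hM1
  · -- high case: n ≥ ℓ
    push_neg at hn
    have hlow : ∀ k < ℓ, iteratedDeriv k (sobPartialSum α β ℓ ω q f n) (ω k)
        = iteratedDeriv k f (ω k) := by
      intro k hk
      rw [itd_sobPartialSum α β ℓ ω q hq_poly f n k (ω k)]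
      have : ∀ m ∈ Finset.range (n + 1),
          sobIP α β ℓ ω f (q m) * iteratedDeriv k (q m) (ω k) =
            if k = m then sobIP α β ℓ ω f (q m) else 0 := by
        intro m _
        by_cases hmℓ : m < ℓ
        · rw [hq_low_der m hmℓ k hk]; simp
        · push_neg at hmℓ
          rw [hq_high_der m hmℓ k hk, mul_zero]
          have : k ≠ m := ne_of_lt (lt_of_lt_of_le hk hmℓ)
          simp [this]
      rw [Finset.sum_congr rfl this,
        Finset.sum_ite_eq (Finset.range (n + 1)) k (fun m => sobIP α β ℓ ω f (q m))]
      have hkmem : k < n + 1 := lt_of_lt_of_le hk (le_trans hn (Nat.le_succ n))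
      rw [if_pos (Finset.mem_range.mpr hkmem), hc_low k hk]
    have htop : ∀ x : ℝ, iteratedDeriv ℓ (sobPartialSum α β ℓ ω q f n) x
        = jacPartialSum α β jp (iteratedDeriv ℓ f) (n - ℓ) x := by
      intro x
      rw [itd_sobPartialSum α β ℓ ω q hq_poly f n ℓ x]
      have hsplit : Finset.range (n + 1) = Finset.Ico 0 (n + 1) := by
        rw [Finset.range_eq_Ico]
      rw [hsplit, ← Finset.sum_Ico_consecutive _ (Nat.zero_le ℓ)
        (Nat.le_succ_of_le hn)]
      have h1 : ∑ m ∈ Finset.Ico 0 ℓ,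
          sobIP α β ℓ ω f (q m) * iteratedDeriv ℓ (q m) x = 0 := by
        refine Finset.sum_eq_zero fun m hm => ?_
        have hmℓ : m < ℓ := (Finset.mem_Ico.mp hm).2
        rw [hq_low_top m hmℓ x, mul_zero]
      rw [h1, zero_add, Finset.sum_Ico_eq_sum_range]
      have hcount : n + 1 - ℓ = n - ℓ + 1 := by omega
      rw [hcount]
      unfold jacPartialSum
      refine Finset.sum_congr rfl fun j hj => ?_
      have hjℓ : ℓ ≤ ℓ + j := Nat.le_add_right _ _
      rw [hq_high_top (ℓ + j) hjℓ x, hc_high (ℓ + j) hjℓ, Nat.add_sub_cancel_left]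
    -- set up the norms
    set IS : ℝ := ∫ x in Set.Ioo (-1 : ℝ) 1,
      |jacPartialSum α β jp (iteratedDeriv ℓ f) (n - ℓ) x| ^ p * jacW α β x
      with hIS_def
    have hIS0 : 0 ≤ IS := by
      refine setIntegral_nonneg measurableSet_Ioo fun x hx => ?_
      exact mul_nonneg (Real.rpow_nonneg (abs_nonneg _) _) (hw x hx)
    have hCnorm : IS ^ (1 / p) ≤ C * If ^ (1 / p) :=
      hC (iteratedDeriv ℓ f) hfp (n - ℓ)
    have hIfp0 : 0 ≤ If ^ (1 / p) := Real.rpow_nonneg hIf0 _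
    have h1 : IS ^ (1 / p) ≤ M * If ^ (1 / p) :=
      le_trans hCnorm (mul_le_mul_of_nonneg_right (le_max_right 1 C) hIfp0)
    have hMp1 : (1 : ℝ) ≤ M ^ p := by
      calc (1 : ℝ) = 1 ^ p := (Real.one_rpow p).symm
        _ ≤ M ^ p := Real.rpow_le_rpow zero_le_one hM1 (le_of_lt hp0)
    have hMp0 : (0 : ℝ) ≤ M ^ p := le_trans zero_le_one hMp1
    have hIS_le : IS ≤ M ^ p * If := by
      have h2 : (IS ^ (1 / p)) ^ p ≤ (M * If ^ (1 / p)) ^ p :=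
        Real.rpow_le_rpow (Real.rpow_nonneg hIS0 _) h1 (le_of_lt hp0)
      have h3 : (IS ^ (1 / p)) ^ p = IS := by
        rw [← Real.rpow_mul hIS0, one_div_mul_cancel (ne_of_gt hp0), Real.rpow_one]
      have h4 : (M * If ^ (1 / p)) ^ p = M ^ p * If := by
        rw [Real.mul_rpow hM0 hIfp0, ← Real.rpow_mul hIf0,
          one_div_mul_cancel (ne_of_gt hp0), Real.rpow_one]
      rw [h3, h4] at h2
      exact h2
    -- conclude
    unfold sobNorm
    have hAS : (∑ k ∈ Finset.range ℓ,
        |iteratedDeriv k (sobPartialSum α β ℓ ω q f n) (ω k)| ^ p) = Af := by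
      refine Finset.sum_congr rfl fun k hk => ?_
      rw [hlow k (Finset.mem_range.mp hk)]
    have hISrw : (∫ x in Set.Ioo (-1 : ℝ) 1,
        |iteratedDeriv ℓ (sobPartialSum α β ℓ ω q f n) x| ^ p * jacW α β x) = IS := by
      rw [hIS_def]
      refine setIntegral_congr_fun measurableSet_Ioo fun x _ => ?_
      rw [htop x]
    rw [hAS, hISrw]
    calc (Af + IS) ^ (1 / p)
        ≤ (M ^ p * (Af + If)) ^ (1 / p) := by
          refine Real.rpow_le_rpow (add_nonneg hAf0 hIS0) ?_ (by positivity)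
          rw [mul_add]
          exact add_le_add (le_mul_of_one_le_left hAf0 hMp1) hIS_le
      _ = M * (Af + If) ^ (1 / p) := by
          rw [Real.mul_rpow hMp0 (add_nonneg hAf0 hIf0), ← Real.rpow_mul hM0,
            mul_one_div_cancel (ne_of_gt hp0), Real.rpow_one]
      _ = M * sobNorm α β p ℓ ω f := rfl
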